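/- For k = 1, 2, 3, 4, 5, 6, 7, the number of k-element subsets of L whose elements are pairwise orthogonal (⟨lᵢ,lⱼ⟩ = 0 for i ≠ j) is, respectively: 56, 756, 4032, 10080, 12096, 6048, 576. -/

import Mathlib

/-- The lattice ℤ⁸. -/
abbrev V : Type := Fin 8 → ℤ

/-- The bilinear form with Gram matrix diag(1,−1,…,−1). -/
def B (v w : V) : ℤ := v 0 * w 0 - ∑ i : Fin 7, v i.succ * w i.succ

/-- The class h = (3,−1,…,−1) with ⟨h,h⟩ = 2. -/
def hh : V := ![3, -1, -1, -1, -1, -1, -1, -1]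

/-- The involution ι(v) = ⟨v,h⟩·h − v. -/
def iota (v : V) : V := B v hh • hh - v

/-- L = {v : ⟨v,v⟩ = −1, ⟨v,h⟩ = 1}. -/
def L : Set V := {v | B v v = -1 ∧ B v hh = 1}

/-- F = {v : ⟨v,v⟩ = 0, ⟨v,h⟩ = 2}. -/
def F : Set V := {v | B v v = 0 ∧ B v hh = 2}

/-- L̄ = L/⟨ι⟩, realized as the set of ι-orbits. -/
def Lbar : Set (Set V) := {p | ∃ v ∈ L, p = {v, iota v}}

/-- F̄ = F/⟨ι⟩, realized as the set of ι-orbits. -/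
def Fbar : Set (Set V) := {p | ∃ v ∈ F, p = {v, iota v}}

/-- G = {g ∈ GL₈(ℤ) : g preserves B and g(h) = h}. -/
def G : Subgroup (V ≃ₗ[ℤ] V) where
  carrier := {g | (∀ v w : V, B (g v) (g w) = B v w) ∧ g hh = hh}
  one_mem' := ⟨fun _ _ => rfl, rfl⟩
  mul_mem' := by
    rintro a b ⟨ha1, ha2⟩ ⟨hb1, hb2⟩
    refine ⟨fun v w => ?_, ?_⟩
    · show B (a (b v)) (a (b w)) = B v w
      rw [ha1, hb1]
    · show a (b hh) = hh
      rw [hb2, ha2]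
  inv_mem' := by
    rintro a ⟨ha1, ha2⟩
    refine ⟨fun v w => ?_, ?_⟩
    · show B (a.symm v) (a.symm w) = B v w
      conv_rhs => rw [← a.apply_symm_apply v, ← a.apply_symm_apply w]
      rw [ha1]
    · show a.symm hh = hh
      conv_lhs => rw [← ha2]
      exact a.symm_apply_apply hh

/-- The k-element subsets of L whose elements are pairwise orthogonal. -/
def OrthSets (k : ℕ) : Set (Finset V) :=
  {s | ↑s ⊆ L ∧ s.card = k ∧ ∀ a ∈ s, ∀ b ∈ s, a ≠ b → B a b = 0}


/-! ### Auxiliary machinery -/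

lemma Bexp (v w : V) : B v w = v 0*w 0 - (v 1*w 1 + v 2*w 2 + v 3*w 3 + v 4*w 4 + v 5*w 5 + v 6*w 6 + v 7*w 7) := by
  simp [B, Fin.sum_univ_seven, show (Fin.succ 2 : Fin 8) = 3 from rfl,
    show (Fin.succ 3 : Fin 8) = 4 from rfl, show (Fin.succ 4 : Fin 8) = 5 from rfl,
    show (Fin.succ 5 : Fin 8) = 6 from rfl, show (Fin.succ 6 : Fin 8) = 7 from rfl]

lemma Bsymm (v w : V) : B v w = B w v := by rw [Bexp, Bexp]; ring

lemma consec (a : ℤ) : 0 ≤ a * (a + 1) := by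
  rcases le_or_gt 0 a with h | h
  · nlinarith
  · have h1 : a ≤ -1 := by omega
    nlinarith

def Llist : List V := [
  ![0, 0, 0, 0, 0, 0, 0, 1],
  ![0, 0, 0, 0, 0, 0, 1, 0],
  ![0, 0, 0, 0, 0, 1, 0, 0],
  ![0, 0, 0, 0, 1, 0, 0, 0],
  ![0, 0, 0, 1, 0, 0, 0, 0],
  ![0, 0, 1, 0, 0, 0, 0, 0],
  ![0, 1, 0, 0, 0, 0, 0, 0],
  ![1, -1, -1, 0, 0, 0, 0, 0],
  ![1, -1, 0, -1, 0, 0, 0, 0],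
  ![1, -1, 0, 0, -1, 0, 0, 0],
  ![1, -1, 0, 0, 0, -1, 0, 0],
  ![1, -1, 0, 0, 0, 0, -1, 0],
  ![1, -1, 0, 0, 0, 0, 0, -1],
  ![1, 0, -1, -1, 0, 0, 0, 0],
  ![1, 0, -1, 0, -1, 0, 0, 0],
  ![1, 0, -1, 0, 0, -1, 0, 0],
  ![1, 0, -1, 0, 0, 0, -1, 0],
  ![1, 0, -1, 0, 0, 0, 0, -1],
  ![1, 0, 0, -1, -1, 0, 0, 0],
  ![1, 0, 0, -1, 0, -1, 0, 0],
  ![1, 0, 0, -1, 0, 0, -1, 0],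
  ![1, 0, 0, -1, 0, 0, 0, -1],
  ![1, 0, 0, 0, -1, -1, 0, 0],
  ![1, 0, 0, 0, -1, 0, -1, 0],
  ![1, 0, 0, 0, -1, 0, 0, -1],
  ![1, 0, 0, 0, 0, -1, -1, 0],
  ![1, 0, 0, 0, 0, -1, 0, -1],
  ![1, 0, 0, 0, 0, 0, -1, -1],
  ![2, -1, -1, -1, -1, -1, 0, 0],
  ![2, -1, -1, -1, -1, 0, -1, 0],
  ![2, -1, -1, -1, -1, 0, 0, -1],
  ![2, -1, -1, -1, 0, -1, -1, 0],
  ![2, -1, -1, -1, 0, -1, 0, -1],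
  ![2, -1, -1, -1, 0, 0, -1, -1],
  ![2, -1, -1, 0, -1, -1, -1, 0],
  ![2, -1, -1, 0, -1, -1, 0, -1],
  ![2, -1, -1, 0, -1, 0, -1, -1],
  ![2, -1, -1, 0, 0, -1, -1, -1],
  ![2, -1, 0, -1, -1, -1, -1, 0],
  ![2, -1, 0, -1, -1, -1, 0, -1],
  ![2, -1, 0, -1, -1, 0, -1, -1],
  ![2, -1, 0, -1, 0, -1, -1, -1],
  ![2, -1, 0, 0, -1, -1, -1, -1],
  ![2, 0, -1, -1, -1, -1, -1, 0],
  ![2, 0, -1, -1, -1, -1, 0, -1],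
  ![2, 0, -1, -1, -1, 0, -1, -1],
  ![2, 0, -1, -1, 0, -1, -1, -1],
  ![2, 0, -1, 0, -1, -1, -1, -1],
  ![2, 0, 0, -1, -1, -1, -1, -1],
  ![3, -2, -1, -1, -1, -1, -1, -1],
  ![3, -1, -2, -1, -1, -1, -1, -1],
  ![3, -1, -1, -2, -1, -1, -1, -1],
  ![3, -1, -1, -1, -2, -1, -1, -1],
  ![3, -1, -1, -1, -1, -2, -1, -1],
  ![3, -1, -1, -1, -1, -1, -2, -1],
  ![3, -1, -1, -1, -1, -1, -1, -2]
]

lemma Llist_nodup : Llist.Nodup := by decide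

lemma Llist_mem_L : ∀ v ∈ Llist, B v v = -1 ∧ B v hh = 1 := by decide

set_option maxHeartbeats 2000000 in
lemma L_char (v : V) : v ∈ L ↔ v ∈ Llist := by
  constructor
  · rintro ⟨hq, hs⟩
    rw [Bexp] at hq hs
    rw [show hh 0 = 3 from rfl, show hh 1 = -1 from rfl, show hh 2 = -1 from rfl,
      show hh 3 = -1 from rfl, show hh 4 = -1 from rfl, show hh 5 = -1 from rfl,
      show hh 6 = -1 from rfl, show hh 7 = -1 from rfl] at hs
    have hrep : v = ![v 0, v 1, v 2, v 3, v 4, v 5, v 6, v 7] := by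
      funext i; fin_cases i <;> rfl
    have hss : v 1 + v 2 + v 3 + v 4 + v 5 + v 6 + v 7 = 1 - 3 * v 0 := by linarith
    have hsq : (v 1 + v 2 + v 3 + v 4 + v 5 + v 6 + v 7)^2 = (1 - 3 * v 0)^2 := by rw [hss]
    have key : 2*(v 0)^2 ≤ 6*(v 0) + 6 := by
      linarith [hq, hsq, sq_nonneg (v 1 - v 2), sq_nonneg (v 1 - v 3), sq_nonneg (v 1 - v 4),
        sq_nonneg (v 1 - v 5), sq_nonneg (v 1 - v 6), sq_nonneg (v 1 - v 7),
        sq_nonneg (v 2 - v 3), sq_nonneg (v 2 - v 4), sq_nonneg (v 2 - v 5),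
        sq_nonneg (v 2 - v 6), sq_nonneg (v 2 - v 7), sq_nonneg (v 3 - v 4),
        sq_nonneg (v 3 - v 5), sq_nonneg (v 3 - v 6), sq_nonneg (v 3 - v 7),
        sq_nonneg (v 4 - v 5), sq_nonneg (v 4 - v 6), sq_nonneg (v 4 - v 7),
        sq_nonneg (v 5 - v 6), sq_nonneg (v 5 - v 7), sq_nonneg (v 6 - v 7)]
    have hlo : 0 ≤ v 0 := by nlinarith [key, sq_nonneg (v 0 + 1)]
    have hhi : v 0 ≤ 3 := by nlinarith [key, sq_nonneg (v 0 - 4)]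
    have hv0 : v 0 = 0 ∨ v 0 = 1 ∨ v 0 = 2 ∨ v 0 = 3 := by omega
    rcases hv0 with hv0 | hv0 | hv0 | hv0 <;> rw [hv0] at hq hs <;> norm_num at hq hs
    · -- v 0 = 0 : each coordinate in {0, 1}
      have key1 : ∀ i : Fin 8, (v i + -1) * (v i + -1 + 1) ≤ 0 → v i = 1 ∨ v i = 0 := by
        intro i hti
        rcases mul_eq_zero.mp (le_antisymm hti (consec _)) with h | h <;> omega
      have e1 : v 1 = 1 ∨ v 1 = 0 := key1 1 (by linarith [consec (v 2 + -1), consec (v 3 + -1), consec (v 4 + -1), consec (v 5 + -1), consec (v 6 + -1), consec (v 7 + -1)])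
      have e2 : v 2 = 1 ∨ v 2 = 0 := key1 2 (by linarith [consec (v 1 + -1), consec (v 3 + -1), consec (v 4 + -1), consec (v 5 + -1), consec (v 6 + -1), consec (v 7 + -1)])
      have e3 : v 3 = 1 ∨ v 3 = 0 := key1 3 (by linarith [consec (v 1 + -1), consec (v 2 + -1), consec (v 4 + -1), consec (v 5 + -1), consec (v 6 + -1), consec (v 7 + -1)])
      have e4 : v 4 = 1 ∨ v 4 = 0 := key1 4 (by linarith [consec (v 1 + -1), consec (v 2 + -1), consec (v 3 + -1), consec (v 5 + -1), consec (v 6 + -1), consec (v 7 + -1)])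
      have e5 : v 5 = 1 ∨ v 5 = 0 := key1 5 (by linarith [consec (v 1 + -1), consec (v 2 + -1), consec (v 3 + -1), consec (v 4 + -1), consec (v 6 + -1), consec (v 7 + -1)])
      have e6 : v 6 = 1 ∨ v 6 = 0 := key1 6 (by linarith [consec (v 1 + -1), consec (v 2 + -1), consec (v 3 + -1), consec (v 4 + -1), consec (v 5 + -1), consec (v 7 + -1)])
      have e7 : v 7 = 1 ∨ v 7 = 0 := key1 7 (by linarith [consec (v 1 + -1), consec (v 2 + -1), consec (v 3 + -1), consec (v 4 + -1), consec (v 5 + -1), consec (v 6 + -1)])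
      rcases e1 with e1 | e1 <;> rcases e2 with e2 | e2 <;> rcases e3 with e3 | e3 <;>
        rcases e4 with e4 | e4 <;> rcases e5 with e5 | e5 <;> rcases e6 with e6 | e6 <;>
        rcases e7 with e7 | e7 <;>
        first
          | (exfalso; omega)
          | (rw [hrep, hv0, e1, e2, e3, e4, e5, e6, e7]; decide)
    · -- v 0 = 1 : each coordinate in {0, -1}
      have key1 : ∀ i : Fin 8, (v i + 0) * (v i + 0 + 1) ≤ 0 → v i = 0 ∨ v i = -1 := by
        intro i hti
        rcases mul_eq_zero.mp (le_antisymm hti (consec _)) with h | h <;> omega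
      have e1 : v 1 = 0 ∨ v 1 = -1 := key1 1 (by linarith [consec (v 2 + 0), consec (v 3 + 0), consec (v 4 + 0), consec (v 5 + 0), consec (v 6 + 0), consec (v 7 + 0)])
      have e2 : v 2 = 0 ∨ v 2 = -1 := key1 2 (by linarith [consec (v 1 + 0), consec (v 3 + 0), consec (v 4 + 0), consec (v 5 + 0), consec (v 6 + 0), consec (v 7 + 0)])
      have e3 : v 3 = 0 ∨ v 3 = -1 := key1 3 (by linarith [consec (v 1 + 0), consec (v 2 + 0), consec (v 4 + 0), consec (v 5 + 0), consec (v 6 + 0), consec (v 7 + 0)])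
      have e4 : v 4 = 0 ∨ v 4 = -1 := key1 4 (by linarith [consec (v 1 + 0), consec (v 2 + 0), consec (v 3 + 0), consec (v 5 + 0), consec (v 6 + 0), consec (v 7 + 0)])
      have e5 : v 5 = 0 ∨ v 5 = -1 := key1 5 (by linarith [consec (v 1 + 0), consec (v 2 + 0), consec (v 3 + 0), consec (v 4 + 0), consec (v 6 + 0), consec (v 7 + 0)])
      have e6 : v 6 = 0 ∨ v 6 = -1 := key1 6 (by linarith [consec (v 1 + 0), consec (v 2 + 0), consec (v 3 + 0), consec (v 4 + 0), consec (v 5 + 0), consec (v 7 + 0)])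
      have e7 : v 7 = 0 ∨ v 7 = -1 := key1 7 (by linarith [consec (v 1 + 0), consec (v 2 + 0), consec (v 3 + 0), consec (v 4 + 0), consec (v 5 + 0), consec (v 6 + 0)])
      rcases e1 with e1 | e1 <;> rcases e2 with e2 | e2 <;> rcases e3 with e3 | e3 <;>
        rcases e4 with e4 | e4 <;> rcases e5 with e5 | e5 <;> rcases e6 with e6 | e6 <;>
        rcases e7 with e7 | e7 <;>
        first
          | (exfalso; omega)
          | (rw [hrep, hv0, e1, e2, e3, e4, e5, e6, e7]; decide)
    · -- v 0 = 2 : each coordinate in {0, -1}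
      have key1 : ∀ i : Fin 8, (v i + 0) * (v i + 0 + 1) ≤ 0 → v i = 0 ∨ v i = -1 := by
        intro i hti
        rcases mul_eq_zero.mp (le_antisymm hti (consec _)) with h | h <;> omega
      have e1 : v 1 = 0 ∨ v 1 = -1 := key1 1 (by linarith [consec (v 2 + 0), consec (v 3 + 0), consec (v 4 + 0), consec (v 5 + 0), consec (v 6 + 0), consec (v 7 + 0)])
      have e2 : v 2 = 0 ∨ v 2 = -1 := key1 2 (by linarith [consec (v 1 + 0), consec (v 3 + 0), consec (v 4 + 0), consec (v 5 + 0), consec (v 6 + 0), consec (v 7 + 0)])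
      have e3 : v 3 = 0 ∨ v 3 = -1 := key1 3 (by linarith [consec (v 1 + 0), consec (v 2 + 0), consec (v 4 + 0), consec (v 5 + 0), consec (v 6 + 0), consec (v 7 + 0)])
      have e4 : v 4 = 0 ∨ v 4 = -1 := key1 4 (by linarith [consec (v 1 + 0), consec (v 2 + 0), consec (v 3 + 0), consec (v 5 + 0), consec (v 6 + 0), consec (v 7 + 0)])
      have e5 : v 5 = 0 ∨ v 5 = -1 := key1 5 (by linarith [consec (v 1 + 0), consec (v 2 + 0), consec (v 3 + 0), consec (v 4 + 0), consec (v 6 + 0), consec (v 7 + 0)])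
      have e6 : v 6 = 0 ∨ v 6 = -1 := key1 6 (by linarith [consec (v 1 + 0), consec (v 2 + 0), consec (v 3 + 0), consec (v 4 + 0), consec (v 5 + 0), consec (v 7 + 0)])
      have e7 : v 7 = 0 ∨ v 7 = -1 := key1 7 (by linarith [consec (v 1 + 0), consec (v 2 + 0), consec (v 3 + 0), consec (v 4 + 0), consec (v 5 + 0), consec (v 6 + 0)])
      rcases e1 with e1 | e1 <;> rcases e2 with e2 | e2 <;> rcases e3 with e3 | e3 <;>
        rcases e4 with e4 | e4 <;> rcases e5 with e5 | e5 <;> rcases e6 with e6 | e6 <;>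
        rcases e7 with e7 | e7 <;>
        first
          | (exfalso; omega)
          | (rw [hrep, hv0, e1, e2, e3, e4, e5, e6, e7]; decide)
    · -- v 0 = 3 : each coordinate in {-1, -2}
      have key1 : ∀ i : Fin 8, (v i + 1) * (v i + 1 + 1) ≤ 0 → v i = -1 ∨ v i = -2 := by
        intro i hti
        rcases mul_eq_zero.mp (le_antisymm hti (consec _)) with h | h <;> omega
      have e1 : v 1 = -1 ∨ v 1 = -2 := key1 1 (by linarith [consec (v 2 + 1), consec (v 3 + 1), consec (v 4 + 1), consec (v 5 + 1), consec (v 6 + 1), consec (v 7 + 1)])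
      have e2 : v 2 = -1 ∨ v 2 = -2 := key1 2 (by linarith [consec (v 1 + 1), consec (v 3 + 1), consec (v 4 + 1), consec (v 5 + 1), consec (v 6 + 1), consec (v 7 + 1)])
      have e3 : v 3 = -1 ∨ v 3 = -2 := key1 3 (by linarith [consec (v 1 + 1), consec (v 2 + 1), consec (v 4 + 1), consec (v 5 + 1), consec (v 6 + 1), consec (v 7 + 1)])
      have e4 : v 4 = -1 ∨ v 4 = -2 := key1 4 (by linarith [consec (v 1 + 1), consec (v 2 + 1), consec (v 3 + 1), consec (v 5 + 1), consec (v 6 + 1), consec (v 7 + 1)])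
      have e5 : v 5 = -1 ∨ v 5 = -2 := key1 5 (by linarith [consec (v 1 + 1), consec (v 2 + 1), consec (v 3 + 1), consec (v 4 + 1), consec (v 6 + 1), consec (v 7 + 1)])
      have e6 : v 6 = -1 ∨ v 6 = -2 := key1 6 (by linarith [consec (v 1 + 1), consec (v 2 + 1), consec (v 3 + 1), consec (v 4 + 1), consec (v 5 + 1), consec (v 7 + 1)])
      have e7 : v 7 = -1 ∨ v 7 = -2 := key1 7 (by linarith [consec (v 1 + 1), consec (v 2 + 1), consec (v 3 + 1), consec (v 4 + 1), consec (v 5 + 1), consec (v 6 + 1)])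
      rcases e1 with e1 | e1 <;> rcases e2 with e2 | e2 <;> rcases e3 with e3 | e3 <;>
        rcases e4 with e4 | e4 <;> rcases e5 with e5 | e5 <;> rcases e6 with e6 | e6 <;>
        rcases e7 with e7 | e7 <;>
        first
          | (exfalso; omega)
          | (rw [hrep, hv0, e1, e2, e3, e4, e5, e6, e7]; decide)
  · intro hv
    exact Llist_mem_L v hv

/-- Adjacency: orthogonality w.r.t. B. -/
def Badj (v w : V) : Bool := B v w == 0

/-- Counting helper. -/
def ccAux {α : Type} (adj : α → α → Bool) (f : List α → ℕ) : List α → ℕ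
  | [] => 0
  | a :: t => ccAux adj f t + f (t.filter (adj a))

/-- Clique counter: `cc adj k l` is the number of `k`-cliques in the graph `adj`
restricted to the (nodup) list `l`. -/
def cc {α : Type} (adj : α → α → Bool) : ℕ → List α → ℕ
  | 0, _ => 1
  | k+1, l => ccAux adj (cc adj k) l

lemma cc_correct {α : Type} [DecidableEq α] (adj : α → α → Bool)
    (hsym : ∀ a b, adj a b = adj b a) :
    ∀ (n : ℕ) (l : List α), l.length ≤ n → l.Nodup → ∀ (k : ℕ),
      ((l.toFinset.powersetCard k).filter
        (fun s => ∀ a ∈ s, ∀ b ∈ s, a ≠ b → adj a b = true)).card = cc adj k l := by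
  intro n
  induction n with
  | zero =>
    intro l hlen _ k
    have : l = [] := List.length_eq_zero_iff.mp (Nat.le_zero.mp hlen)
    subst this
    cases k with
    | zero => simp [cc, Finset.filter_singleton]
    | succ k =>
      rw [show (([] : List α).toFinset) = (∅ : Finset α) from rfl,
        Finset.powersetCard_eq_empty.mpr (by simp)]
      simp [cc, ccAux]
  | succ n ihn =>
    intro l hlen hnd k
    match l with
    | [] =>
      cases k with
      | zero => simp [cc, Finset.filter_singleton]
      | succ k =>
        rw [show (([] : List α).toFinset) = (∅ : Finset α) from rfl,
          Finset.powersetCard_eq_empty.mpr (by simp)]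
        simp [cc, ccAux]
    | a :: t =>
      obtain ⟨ha, hndt⟩ := List.nodup_cons.mp hnd
      have hlent : t.length ≤ n := by simpa using hlen
      cases k with
      | zero => simp [cc, Finset.filter_singleton]
      | succ k =>
        have hat : a ∉ t.toFinset := by simpa using ha
        rw [List.toFinset_cons, Finset.powersetCard_succ_insert hat, Finset.filter_union]
        have hnotmem : ∀ u ∈ t.toFinset.powersetCard k, a ∉ u := by
          intro u hu hau
          exact hat ((Finset.mem_powersetCard.mp hu).1 hau)
        have hdisj : Disjoint
            ((t.toFinset.powersetCard (k+1)).filter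
              (fun s => ∀ a ∈ s, ∀ b ∈ s, a ≠ b → adj a b = true))
            (((t.toFinset.powersetCard k).image (insert a)).filter
              (fun s => ∀ a ∈ s, ∀ b ∈ s, a ≠ b → adj a b = true)) := by
          rw [Finset.disjoint_left]
          intro s hs1 hs2
          have h1 := Finset.mem_filter.mp hs1
          have h2 := Finset.mem_filter.mp hs2
          obtain ⟨u, hu, rfl⟩ := Finset.mem_image.mp h2.1
          have : a ∉ insert a u := by
            intro _
            exact hat ((Finset.mem_powersetCard.mp h1.1).1 (by simp))
          exact this (Finset.mem_insert_self a u)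
        rw [Finset.card_union_of_disjoint hdisj]
        have part1 := ihn t hlent hndt (k+1)
        have part2 :
            (((t.toFinset.powersetCard k).image (insert a)).filter
              (fun s => ∀ a ∈ s, ∀ b ∈ s, a ≠ b → adj a b = true)).card
            = cc adj k (t.filter (adj a)) := by
          rw [Finset.filter_image]
          rw [Finset.card_image_of_injOn]
          · have hfe :
                (t.toFinset.powersetCard k).filter
                  (fun u : Finset α => ∀ x ∈ insert a u, ∀ y ∈ insert a u, x ≠ y → adj x y = true)
                = ((t.filter (adj a)).toFinset.powersetCard k).filter
                  (fun s => ∀ a ∈ s, ∀ b ∈ s, a ≠ b → adj a b = true) := by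
              ext u
              simp only [Finset.mem_filter, Finset.mem_powersetCard, List.toFinset_filter]
              constructor
              · rintro ⟨⟨hsub, hcard⟩, hp⟩
                have hau : a ∉ u := fun hau => hat (hsub hau)
                refine ⟨⟨fun x hx => Finset.mem_filter.mpr ⟨hsub hx, ?_⟩, hcard⟩,
                  fun x hx y hy hxy => hp x (Finset.mem_insert_of_mem hx) y
                    (Finset.mem_insert_of_mem hy) hxy⟩
                exact hp a (Finset.mem_insert_self a u) x (Finset.mem_insert_of_mem hx)
                  (fun h => hau (h ▸ hx))
              · rintro ⟨⟨hsub, hcard⟩, hp⟩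
                have hsub' : u ⊆ t.toFinset := fun x hx => (Finset.mem_filter.mp (hsub hx)).1
                have hadj : ∀ x ∈ u, adj a x = true :=
                  fun x hx => (Finset.mem_filter.mp (hsub hx)).2
                have hau : a ∉ u := fun hau => hat (hsub' hau)
                refine ⟨⟨hsub', hcard⟩, fun x hx y hy hxy => ?_⟩
                rcases Finset.mem_insert.mp hx with rfl | hx'
                · rcases Finset.mem_insert.mp hy with rfl | hy'
                  · exact absurd rfl hxy
                  · exact hadj y hy'
                · rcases Finset.mem_insert.mp hy with rfl | hy'
                  · rw [hsym]; exact hadj x hx'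
                  · exact hp x hx' y hy' hxy
            rw [hfe]
            exact ihn (t.filter (adj a)) (le_trans (List.length_filter_le _ _) hlent)
              (hndt.filter _) k
          · intro u1 h1 u2 h2 he
            have k1 : a ∉ u1 := hnotmem u1 (Finset.mem_coe.mp (Finset.mem_of_mem_filter _ h1))
            have k2 : a ∉ u2 := hnotmem u2 (Finset.mem_coe.mp (Finset.mem_of_mem_filter _ h2))
            rw [← Finset.erase_insert k1, ← Finset.erase_insert k2, he]
        rw [part1, part2]
        rfl

lemma Badj_symm : ∀ v w : V, Badj v w = Badj w v := by
  intro v w; unfold Badj; rw [Bsymm]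

lemma orth_eq_coe (k : ℕ) :
    OrthSets k = ↑((Llist.toFinset.powersetCard k).filter
      (fun s => ∀ a ∈ s, ∀ b ∈ s, a ≠ b → Badj a b = true)) := by
  ext s
  simp only [OrthSets, Set.mem_setOf_eq, Finset.coe_filter, Finset.mem_coe,
    Finset.mem_filter, Finset.mem_powersetCard, Set.mem_setOf_eq]
  constructor
  · rintro ⟨hsub, hcard, horth⟩
    refine ⟨⟨fun x hx => ?_, hcard⟩, fun x hx y hy hxy => ?_⟩
    · exact List.mem_toFinset.mpr ((L_char x).mp (hsub hx))
    · simp only [Badj, beq_iff_eq]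
      exact horth x hx y hy hxy
  · rintro ⟨⟨hsub, hcard⟩, horth⟩
    refine ⟨fun x hx => (L_char x).mpr (List.mem_toFinset.mp (hsub hx)), hcard,
      fun x hx y hy hxy => ?_⟩
    have := horth x hx y hy hxy
    simpa [Badj, beq_iff_eq] using this

lemma count_eq (k : ℕ) : (OrthSets k).ncard = cc Badj k Llist := by
  rw [orth_eq_coe k, Set.ncard_coe_finset]
  exact cc_correct Badj Badj_symm Llist.length Llist (le_refl _) Llist_nodup k

set_option maxHeartbeats 4000000 in
/-- the numbers of pairwise orthogonal k-subsets of L for k = 1,…,7. -/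
theorem stmt13 :
    (OrthSets 1).ncard = 56 ∧ (OrthSets 2).ncard = 756 ∧ (OrthSets 3).ncard = 4032 ∧
    (OrthSets 4).ncard = 10080 ∧ (OrthSets 5).ncard = 12096 ∧ (OrthSets 6).ncard = 6048 ∧
    (OrthSets 7).ncard = 576 := by
  refine ⟨?_, ?_, ?_, ?_, ?_, ?_, ?_⟩ <;> rw [count_eq] <;> decide
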